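/- Let G be a semigroup with identity 1 and F a field. If f, α : G → F satisfy f(xy) - f(x)·f(y) = α(xy) for all x, y ∈ G, then there exists an exponential function m : G → F (satisfying m(xy) = m(x)m(y)) such that f(x) = f(1)·m(x) and α(x) = f(1)·(1 - f(1))·m(x) for all x ∈ G. -/

import Mathlib

theorem stmt_12 {G : Type*} [Monoid G] {F : Type*} [Field F] (f α : G → F)
    (hf : ∀ x y : G, f (x * y) - f x * f y = α (x * y)) :
    ∃ m : G → F, (∀ x y, m (x * y) = m x * m y) ∧
      (∀ x, f x = f 1 * m x) ∧ ∀ x, α x = f 1 * (1 - f 1) * m x := by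
  have hα : ∀ x, α x = f x - f x * f 1 := by
    intro x
    have := hf x 1
    rw [mul_one] at this
    linear_combination -this
  have key : ∀ x y, f (x * y) * f 1 = f x * f y := by
    intro x y
    have h1 := hf x y
    have h2 := hα (x * y)
    linear_combination h1 + h2
  by_cases hc : f 1 = 0
  · have hz : ∀ x, f x = 0 := by
      intro x
      have := key x x
      rw [hc, mul_zero] at this
      exact mul_self_eq_zero.mp this.symm
    exact ⟨fun _ => 1, by simp, fun x => by simp [hz x, hc],
      fun x => by simp [hα x, hz x, hc]⟩
  · refine ⟨fun x => f x / f 1, ?_, ?_, ?_⟩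
    · intro x y
      field_simp
      linear_combination key x y
    · intro x; field_simp
    · intro x
      rw [hα x]
      field_simp
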